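/- Let f ∈ ℚ[x_1,…,x_n] be a form of degree d > 1 with h(f) = h, and suppose f = x_1 v_1 + u_2 v_2 + … + u_h v_h where v_1, u_j, v_j are rational forms of positive degree. Then h(f|_{x_1=0}) = h − 1. -/

import Mathlib

open MvPolynomial

/-- The h-invariant (rational Schmidt rank) of a polynomial `f`: the least `h` such that
`f = ∑_{i=1}^h U_i V_i` with all `U_i, V_i` rational forms of positive degree. -/
noncomputable def hInv {n : ℕ} (f : MvPolynomial (Fin n) ℚ) : ℕ :=
  sInf {h : ℕ | ∃ U V : Fin h → MvPolynomial (Fin n) ℚ,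
    (∀ i, ∃ d, 0 < d ∧ (U i).IsHomogeneous d) ∧
    (∀ i, ∃ d, 0 < d ∧ (V i).IsHomogeneous d) ∧
    f = ∑ i, U i * V i}

lemma aux_dvd {n : ℕ} (j : Fin n) (f : MvPolynomial (Fin n) ℚ) :
    X j ∣ f - aeval (Function.update X j 0) f := by
  induction f using MvPolynomial.induction_on with
  | C a => simp [aeval_C, algebraMap_eq]
  | add p q hp hq =>
      rw [map_add]
      have : p + q - (aeval (Function.update X j 0) p + aeval (Function.update X j 0) q)
          = (p - aeval (Function.update X j 0) p) + (q - aeval (Function.update X j 0) q) := by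
        ring
      rw [this]
      exact dvd_add hp hq
  | mul_X p i hp =>
      rw [map_mul, aeval_X]
      by_cases hij : i = j
      · subst hij
        rw [Function.update_self]
        simpa using Dvd.intro_left _ rfl
      · rw [Function.update_of_ne hij]
        have : p * X i - aeval (Function.update X j 0) p * X i
            = (p - aeval (Function.update X j 0) p) * X i := by ring
        rw [this]
        exact (hp).mul_right _

lemma aux_homog_of_X_mul {n : ℕ} {j : Fin n} {q : MvPolynomial (Fin n) ℚ} {m : ℕ}
    (hm : 0 < m) (hq : (X j * q).IsHomogeneous m) : q.IsHomogeneous (m - 1) := by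
  intro e he
  have h1 : coeff (Finsupp.single j 1 + e) (X j * q) = coeff e q := coeff_X_mul e j q
  have h2 := hq (d := Finsupp.single j 1 + e) (by rw [h1]; exact he)
  rw [map_add] at h2
  have h3 : (Finsupp.weight (1 : Fin n → ℕ)) (Finsupp.single j 1) = 1 := by
    simp [Finsupp.weight_apply]
  rw [h3] at h2
  show (Finsupp.weight 1) e = m - 1
  omega

lemma aux_update_homog {n : ℕ} (j : Fin n) (i : Fin n) :
    (Function.update X j (0 : MvPolynomial (Fin n) ℚ) i).IsHomogeneous 1 := by
  by_cases hij : i = j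
  · subst hij; rw [Function.update_self]; exact isHomogeneous_zero _ _ _
  · rw [Function.update_of_ne hij]; exact isHomogeneous_X _ _

theorem stmt1 {n d h : ℕ} (hn : 0 < n) (hd : 1 < d) (hh : 0 < h)
    (f : MvPolynomial (Fin n) ℚ) (hf : f.IsHomogeneous d) (hfh : hInv f = h)
    (u v : Fin h → MvPolynomial (Fin n) ℚ)
    (hu0 : u ⟨0, hh⟩ = X ⟨0, hn⟩)
    (hu : ∀ i, ∃ e, 0 < e ∧ (u i).IsHomogeneous e)
    (hv : ∀ i, ∃ e, 0 < e ∧ (v i).IsHomogeneous e)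
    (hsum : f = ∑ i, u i * v i) :
    hInv (aeval (Function.update X ⟨0, hn⟩ 0) f) = h - 1 := by
  obtain ⟨h', rfl⟩ : ∃ h'', h = h'' + 1 := ⟨h - 1, (Nat.succ_pred_eq_of_pos hh).symm⟩
  set j : Fin n := ⟨0, hn⟩
  set σ0 : Fin n → MvPolynomial (Fin n) ℚ := Function.update X j 0 with hσ0
  set g : MvPolynomial (Fin n) ℚ := aeval σ0 f with hg
  have hghom : g.IsHomogeneous d := by
    have := hf.aeval σ0 (aux_update_homog j)
    rwa [one_mul] at this
  -- upper bound witness: h' is in the set for g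
  have hmem : h' ∈ {k : ℕ | ∃ U V : Fin k → MvPolynomial (Fin n) ℚ,
      (∀ i, ∃ e, 0 < e ∧ (U i).IsHomogeneous e) ∧
      (∀ i, ∃ e, 0 < e ∧ (V i).IsHomogeneous e) ∧
      g = ∑ i, U i * V i} := by
    refine ⟨fun i => aeval σ0 (u i.succ), fun i => aeval σ0 (v i.succ), ?_, ?_, ?_⟩
    · intro i
      obtain ⟨e, he, hhom⟩ := hu i.succ
      exact ⟨e, he, by simpa [one_mul] using hhom.aeval σ0 (aux_update_homog j)⟩
    · intro i
      obtain ⟨e, he, hhom⟩ := hv i.succ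
      exact ⟨e, he, by simpa [one_mul] using hhom.aeval σ0 (aux_update_homog j)⟩
    · have h0 : aeval σ0 (u 0) = 0 := by
        have : u (0 : Fin (h' + 1)) = X j := hu0
        rw [this, aeval_X, hσ0, Function.update_self]
      calc g = ∑ i : Fin (h' + 1), aeval σ0 (u i) * aeval σ0 (v i) := by
              rw [hg, hsum, map_sum]; simp [map_mul]
        _ = aeval σ0 (u 0) * aeval σ0 (v 0)
              + ∑ i : Fin h', aeval σ0 (u i.succ) * aeval σ0 (v i.succ) :=
              Fin.sum_univ_succ _
        _ = ∑ i : Fin h', aeval σ0 (u i.succ) * aeval σ0 (v i.succ) := by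
              rw [h0, zero_mul, zero_add]
  have hle : hInv g ≤ h' := Nat.sInf_le hmem
  -- lower bound
  obtain ⟨U, V, hU, hV, hgsum⟩ := Nat.sInf_mem (⟨h', hmem⟩ :
    Set.Nonempty {k : ℕ | ∃ U V : Fin k → MvPolynomial (Fin n) ℚ,
      (∀ i, ∃ e, 0 < e ∧ (U i).IsHomogeneous e) ∧
      (∀ i, ∃ e, 0 < e ∧ (V i).IsHomogeneous e) ∧
      g = ∑ i, U i * V i})
  have hgsum' : g = ∑ i : Fin (hInv g), U i * V i := hgsum
  obtain ⟨q, hq⟩ := aux_dvd j f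
  have hfg : (f - g).IsHomogeneous d := hf.sub hghom
  have hqhom : q.IsHomogeneous (d - 1) := by
    apply aux_homog_of_X_mul (by omega)
    rw [← hq]; exact hfg
  have hmemf : (hInv g + 1) ∈ {m : ℕ | ∃ U V : Fin m → MvPolynomial (Fin n) ℚ,
      (∀ i, ∃ e, 0 < e ∧ (U i).IsHomogeneous e) ∧
      (∀ i, ∃ e, 0 < e ∧ (V i).IsHomogeneous e) ∧
      f = ∑ i, U i * V i} := by
    refine ⟨Fin.cases (X j) U, Fin.cases q V, ?_, ?_, ?_⟩
    · intro i
      induction i using Fin.cases with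
      | zero => exact ⟨1, one_pos, isHomogeneous_X ℚ j⟩
      | succ i => exact hU i
    · intro i
      induction i using Fin.cases with
      | zero => exact ⟨d - 1, by omega, hqhom⟩
      | succ i => exact hV i
    · rw [Fin.sum_univ_succ]
      simp only [Fin.cases_zero, Fin.cases_succ]
      show f = X j * q + ∑ i : Fin (hInv g), U i * V i
      rw [← hgsum', ← hq]
      ring
  have hge : h' + 1 ≤ hInv g + 1 := by
    rw [← hfh]
    exact Nat.sInf_le hmemf
  have : hInv g = h' := le_antisymm hle (by omega)
  simpa [hg, hσ0] using this
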